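/- Let S be a commutative ring with 1, let d ≥ 1, let u ∈ ℤ^d with u ≠ 0, and let s ∈ S be a unit. Then the element 1 − s·z^u of the Laurent polynomial ring S[z_1^{±1},…,z_d^{±1}] (the monoid algebra of S over the additive group ℤ^d) is not a zero divisor; i.e., it is a regular element. -/

import Mathlib

/-- in the Laurent polynomial ring `S[z₁^{±1},…,z_d^{±1}]`
(the group algebra of `ℤ^d` over `S`), the element `1 − s·z^u` with `s` a unit
and `u ≠ 0` is a regular element (not a zero divisor). -/
theorem one_sub_unit_monomial_nonZeroDivisor
    {S : Type*} [CommRing S] {d : ℕ} (hd : 1 ≤ d)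
    (u : Fin d → ℤ) (hu : u ≠ 0) (s : S) (hs : IsUnit s) :
    (1 - AddMonoidAlgebra.single u s) ∈
      nonZeroDivisors (AddMonoidAlgebra S (Fin d → ℤ)) := by
  rw [mem_nonZeroDivisors_iff_right]
  intro g hg
  by_contra hgne
  -- from g * (1 - single u s) = 0 we get g = g * single u s
  have h2 : g = g * AddMonoidAlgebra.single u s := by
    have := hg
    rw [mul_sub, mul_one, sub_eq_zero] at this
    exact this
  have key : ∀ v : Fin d → ℤ, g.coeff v = g.coeff (v - u) * s := by
    intro v
    conv_lhs => rw [h2]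
    exact AddMonoidAlgebra.coeff_mul_single_apply g s u v
  -- the linear functional φ v = ∑ i, v i * u i
  set φ : (Fin d → ℤ) → ℤ := fun v => ∑ i, v i * u i with hφ
  have hφadd : ∀ v, φ (v + u) = φ v + φ u := by
    intro v
    simp only [hφ, Pi.add_apply, add_mul, Finset.sum_add_distrib]
  have hφu : 0 < φ u := by
    have : ∃ i, u i ≠ 0 := by
      by_contra h
      push_neg at h
      exact hu (funext h)
    obtain ⟨i, hi⟩ := this
    have hle : u i * u i ≤ ∑ j, u j * u j :=
      Finset.single_le_sum (fun j _ => mul_self_nonneg (u j)) (Finset.mem_univ i)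
    have hpos : 0 < u i * u i := by rcases hi.lt_or_gt with h|h; exacts [mul_pos_of_neg_of_neg h h, mul_pos h h]
    simpa [hφ] using lt_of_lt_of_le hpos hle
  -- support of g is invariant under v ↦ v + u
  have hsupp : ∀ v ∈ g.coeff.support, v + u ∈ g.coeff.support := by
    intro v hv
    rw [Finsupp.mem_support_iff] at hv ⊢
    have := key (v + u)
    simp only [add_sub_cancel_right] at this
    rw [this]
    intro h
    exact hv (hs.mul_left_eq_zero.mp h)
  -- pick v maximizing φ on support
  have hne : g.coeff.support.Nonempty := Finsupp.support_nonempty_iff.mpr (mt AddMonoidAlgebra.coeff_eq_zero.mp hgne)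
  obtain ⟨v, hv, hmax⟩ := g.coeff.support.exists_max_image φ hne
  have := hmax (v + u) (hsupp v hv)
  rw [hφadd] at this
  omega
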